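/- Let T be a finite tree with n ≥ 2 vertices and m = n − 1 edges. Then (Σ_{uv ∈ E(T)} ε₃(u;T)·ε₃(v;T)) / m ≤ (Σ_{u ∈ V(T)} ε₃(u;T)²) / n, that is, F₂(T)/m(T) ≤ F₁(T)/n(T). -/

import Mathlib

open SimpleGraph Finset

variable {V : Type*}

/-- The Fermat distance of a vertex triple: minimum over all vertices σ of
    `d(σ,u) + d(σ,v) + d(σ,w)`. -/
noncomputable def fermatDist (G : SimpleGraph V) (u v w : V) : ℕ :=
  ⨅ σ : V, (G.dist σ u + G.dist σ v + G.dist σ w)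

/-- The Fermat eccentricity `ε₃(u;G)`: maximum Fermat distance of triples containing `u`. -/
noncomputable def fermatEcc [Fintype V] (G : SimpleGraph V) (u : V) : ℕ :=
  Finset.univ.sup fun p : V × V => fermatDist G u p.1 p.2

/-- The ordinary eccentricity `ε₂(u;G)`. -/
noncomputable def ecc2 [Fintype V] (G : SimpleGraph V) (u : V) : ℕ :=
  Finset.univ.sup fun v => G.dist u v

/-- The diameter of `G`. -/
noncomputable def gdiam [Fintype V] (G : SimpleGraph V) : ℕ :=
  Finset.univ.sup fun p : V × V => G.dist p.1 p.2

/-- A central vertex: one minimizing the ordinary eccentricity. -/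
def isCentral [Fintype V] (G : SimpleGraph V) (c : V) : Prop :=
  ∀ u : V, ecc2 G c ≤ ecc2 G u

/-- The number of edges of `G`. -/
noncomputable def numEdges [Fintype V] (G : SimpleGraph V) : ℕ :=
  letI := Classical.decEq V
  letI := Classical.decRel G.Adj
  G.edgeFinset.card

/-- The first Zagreb–Fermat eccentricity index `F₁(G) = Σ_u ε₃(u)²`. -/
noncomputable def F1 [Fintype V] (G : SimpleGraph V) : ℕ :=
  ∑ u : V, (fermatEcc G u) ^ 2

/-- The second Zagreb–Fermat eccentricity index `F₂(G) = Σ_{uv ∈ E} ε₃(u)·ε₃(v)`. -/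
noncomputable def F2 [Fintype V] (G : SimpleGraph V) : ℕ :=
  letI := Classical.decEq V
  letI := Classical.decRel G.Adj
  ∑ e ∈ G.edgeFinset,
    Sym2.lift ⟨fun u v => fermatEcc G u * fermatEcc G v, fun _ _ => mul_comm _ _⟩ e

/-- `u` lies in the subtree `T_{v_i}` hanging off the `i`-th vertex of the path `P`:
its geodesic to every vertex of `P` passes through `P.getVert i`. -/
def inSubtree (G : SimpleGraph V) {a b : V} (P : G.Walk a b) (i : ℕ) (u : V) : Prop :=
  ∀ j ≤ P.length, G.dist u (P.getVert j) = G.dist u (P.getVert i) + G.dist (P.getVert i) (P.getVert j)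

/-- `ℓ_i`: the height of the subtree `T_{v_i}`. -/
noncomputable def subtreeHeight [Fintype V] (G : SimpleGraph V) {a b : V} (P : G.Walk a b)
    (i : ℕ) : ℕ :=
  letI := Classical.decPred (inSubtree G P i)
  Finset.univ.sup fun u => if inSubtree G P i u then G.dist (P.getVert i) u else 0


section TreeBasics
variable {T : SimpleGraph V}

/-- In a tree, every path realizes the distance. -/
lemma tree_path_length (hT : T.IsTree) {u v : V} (p : T.Walk u v) (hp : p.IsPath) :
    p.length = T.dist u v := by
  classical
  obtain ⟨q, hq, hql⟩ := hT.isConnected.exists_path_of_dist u v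
  have := (hT.existsUnique_path u v).unique hp hq
  rw [this, hql]

lemma tree_support_split (hT : T.IsTree) {u v z : V} (p : T.Walk u v) (hp : p.IsPath)
    (hz : z ∈ p.support) : T.dist u z + T.dist z v = T.dist u v := by
  classical
  have hsp := p.take_spec hz
  have hlen : (p.takeUntil z hz).length + (p.dropUntil z hz).length = p.length := by
    rw [← Walk.length_append, hsp]
  have h1 : T.dist u z ≤ (p.takeUntil z hz).length := dist_le _
  have h2 : T.dist z v ≤ (p.dropUntil z hz).length := dist_le _
  have h3 : T.dist u v ≤ T.dist u z + T.dist z v := hT.isConnected.dist_triangle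
  have h4 : p.length = T.dist u v := tree_path_length hT p hp
  omega

lemma dist_adj' (h : T.Adj u v) : T.dist u v = 1 := dist_eq_one_iff_adj.2 h

/-- A geodesic path. -/
noncomputable def geo (hT : T.IsTree) (u v : V) : T.Walk u v :=
  (hT.isConnected.exists_path_of_dist u v).choose

lemma geo_isPath (hT : T.IsTree) (u v : V) : (geo hT u v).IsPath :=
  (hT.isConnected.exists_path_of_dist u v).choose_spec.1

lemma geo_length (hT : T.IsTree) (u v : V) : (geo hT u v).length = T.dist u v :=
  (hT.isConnected.exists_path_of_dist u v).choose_spec.2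

lemma geo_split (hT : T.IsTree) {u v z : V} (hz : z ∈ (geo hT u v).support) :
    T.dist u z + T.dist z v = T.dist u v :=
  tree_support_split hT _ (geo_isPath hT u v) hz

/-- no two adjacent vertices are equidistant from `v` (trees are bipartite). -/
lemma tree_adj_dist_ne (hT : T.IsTree) {u w : V} (h : T.Adj u w) (v : V) :
    T.dist v u ≠ T.dist v w := by
  intro he
  have huw : u ≠ w := h.ne
  have hmem : ¬ u ∈ (geo hT v w).support := by
    intro hmem
    have := geo_split hT hmem
    have h1 : T.dist u w = 1 := dist_adj' h
    have h2 : T.dist w u = T.dist u w := dist_comm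
    omega
  -- path v -> w -> u
  have hp2 : ((geo hT v w).append (Walk.cons h.symm Walk.nil)).IsPath := by
    rw [Walk.isPath_def, Walk.support_append, List.nodup_append]
    refine ⟨(geo_isPath hT v w).2, by simp, ?_⟩
    simp only [Walk.support_cons, Walk.support_nil, List.tail_cons]
    intro a ha b hb hab
    simp at hb
    rw [hab, hb] at ha
    exact hmem ha
  have := (hT.existsUnique_path v u).unique hp2 (geo_isPath hT v u)
  have hl := congrArg Walk.length this
  rw [Walk.length_append, geo_length, geo_length] at hl
  simp at hl
  omega

/-- unique neighbor strictly closer to `v`. -/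
lemma tree_unique_down (hT : T.IsTree) {u v w1 w2 : V} (h1 : T.Adj u w1) (h2 : T.Adj u w2)
    (e1 : T.dist v w1 + 1 = T.dist v u) (e2 : T.dist v w2 + 1 = T.dist v u) : w1 = w2 := by
  have key : ∀ {w : V} (h : T.Adj u w), T.dist v w + 1 = T.dist v u →
      ¬ u ∈ (geo hT w v).support := by
    intro w h he hmem
    have h3 := geo_split hT hmem
    have h4 : T.dist w u = 1 := dist_adj' h.symm
    have h5 : T.dist w v = T.dist v w := dist_comm
    have h6 : T.dist w u = T.dist u w := dist_comm
    have h7 : T.dist u v = T.dist v u := dist_comm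
    omega
  have hp1 : (Walk.cons h1 (geo hT w1 v)).IsPath := by
    rw [Walk.cons_isPath_iff]
    exact ⟨geo_isPath hT w1 v, key h1 e1⟩
  have hp2 : (Walk.cons h2 (geo hT w2 v)).IsPath := by
    rw [Walk.cons_isPath_iff]
    exact ⟨geo_isPath hT w2 v, key h2 e2⟩
  have hpe := (hT.existsUnique_path u v).unique hp1 hp2
  by_contra hne
  -- w1 in support of first; show not in support of second
  have hw1 : w1 ∈ (Walk.cons h1 (geo hT w1 v)).support := by simp
  rw [hpe] at hw1
  simp only [Walk.support_cons, List.mem_cons] at hw1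
  rcases hw1 with rfl | hw1
  · exact h1.ne rfl
  · have h3 := geo_split hT hw1
    have h5 : T.dist w1 v = T.dist v w1 := dist_comm
    have h6 : T.dist w2 v = T.dist v w2 := dist_comm
    have h7 : T.dist w2 w1 = 0 := by omega
    exact hne ((hT.isConnected.dist_eq_zero_iff.1 h7).symm)

end TreeBasics

section Med
variable {T : SimpleGraph V}

lemma tree_med (hT : T.IsTree) (x y w : V) :
    ∃ σ, 2*(T.dist σ x + T.dist σ y + T.dist σ w) ≤ T.dist x y + T.dist x w + T.dist y w := by
  suffices H : ∀ N x y w, T.dist x w + T.dist y w ≤ N →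
      ∃ σ, 2*(T.dist σ x + T.dist σ y + T.dist σ w) ≤ T.dist x y + T.dist x w + T.dist y w from
    H _ x y w le_rfl
  intro N
  induction N with
  | zero =>
    intro x y w h
    have hx : T.dist x w = 0 := by omega
    have hy : T.dist y w = 0 := by omega
    have hx' := hT.isConnected.dist_eq_zero_iff.1 hx
    have hy' := hT.isConnected.dist_eq_zero_iff.1 hy
    subst hx'
    refine ⟨x, ?_⟩
    have : T.dist x x = 0 := dist_self
    have : T.dist x y = T.dist y x := dist_comm
    omega
  | succ N ih =>
    intro x y w hN
    by_cases hal : T.dist x y = T.dist x w + T.dist w y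
    · refine ⟨w, ?_⟩
      have c1 : T.dist w x = T.dist x w := dist_comm
      have c2 : T.dist w y = T.dist y w := dist_comm
      have c3 : T.dist w w = 0 := dist_self
      omega
    · have htri : T.dist x y ≤ T.dist x w + T.dist w y := hT.isConnected.dist_triangle
      have c2 : T.dist w y = T.dist y w := dist_comm
      have c1 : T.dist w x = T.dist x w := dist_comm
      -- the concatenated walk is not a path
      set W := ((geo hT w x).reverse).append (geo hT w y) with hW
      have hWlen : W.length = T.dist x w + T.dist y w := by
        rw [hW, Walk.length_append, Walk.length_reverse, geo_length, geo_length]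
        omega
      have hnp : ¬ W.IsPath := by
        intro hp
        have := tree_path_length hT W hp
        omega
      rw [Walk.isPath_def, hW, Walk.support_append, List.nodup_append] at hnp
      push_neg at hnp
      have hd := hnp (by rw [Walk.support_reverse]; exact List.nodup_reverse.2 (geo_isPath hT w x).2)
        ((geo_isPath hT w y).2.sublist (List.tail_sublist _))
      obtain ⟨z, hz1, b, hz2, hzb⟩ := hd
      subst hzb
      rw [Walk.support_reverse, List.mem_reverse] at hz1
      have hzw : z ≠ w := by
        intro rfl'
        subst rfl'
        have := (geo_isPath hT z y).2
        have hsup : (geo hT z y).support = z :: (geo hT z y).support.tail :=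
          (Walk.support_eq_cons _)
        rw [hsup] at this
        exact (List.nodup_cons.1 this).1 hz2
      have hz2' : z ∈ (geo hT w y).support := List.mem_of_mem_tail hz2
      have s1 := geo_split hT hz1
      have s2 := geo_split hT hz2'
      have hwz : T.dist w z ≠ 0 := by
        intro h0
        exact hzw (hT.isConnected.dist_eq_zero_iff.1 h0).symm
      have c3 : T.dist z x = T.dist x z := dist_comm
      have c4 : T.dist z y = T.dist y z := dist_comm
      obtain ⟨σ, hσ⟩ := ih x y z (by omega)
      refine ⟨σ, ?_⟩
      have htr2 : T.dist σ w ≤ T.dist σ z + T.dist z w := hT.isConnected.dist_triangle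
      have c5 : T.dist z w = T.dist w z := dist_comm
      omega

end Med

section Fermat
variable {T : SimpleGraph V}

lemma fermatDist_le (G : SimpleGraph V) (u v w σ : V) :
    fermatDist G u v w ≤ G.dist σ u + G.dist σ v + G.dist σ w :=
  Nat.sInf_le ⟨σ, rfl⟩

lemma fermatDist_exists [Nonempty V] (G : SimpleGraph V) (u v w : V) :
    ∃ σ, fermatDist G u v w = G.dist σ u + G.dist σ v + G.dist σ w := by
  obtain ⟨σ, hσ⟩ := Nat.sInf_mem
    (Set.range_nonempty (f := fun σ : V => G.dist σ u + G.dist σ v + G.dist σ w))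
  exact ⟨σ, hσ.symm⟩

lemma per_le_two_fermatDist [Nonempty V] (hc : T.Connected) (u v w : V) :
    T.dist u v + T.dist u w + T.dist v w ≤ 2 * fermatDist T u v w := by
  obtain ⟨σ, hσ⟩ := fermatDist_exists T u v w
  have t1 : T.dist u v ≤ T.dist u σ + T.dist σ v := hc.dist_triangle
  have t2 : T.dist u w ≤ T.dist u σ + T.dist σ w := hc.dist_triangle
  have t3 : T.dist v w ≤ T.dist v σ + T.dist σ w := hc.dist_triangle
  have c1 : T.dist u σ = T.dist σ u := dist_comm
  have c2 : T.dist v σ = T.dist σ v := dist_comm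
  omega

lemma two_fermatDist_le_per (hT : T.IsTree) (u v w : V) :
    2 * fermatDist T u v w ≤ T.dist u v + T.dist u w + T.dist v w := by
  obtain ⟨σ, hσ⟩ := tree_med hT u v w
  have := fermatDist_le T u v w σ
  omega

lemma fermatDist_le_ecc [Fintype V] (G : SimpleGraph V) (u x y : V) :
    fermatDist G u x y ≤ fermatEcc G u := by
  have h := Finset.le_sup (s := (univ : Finset (V × V)))
    (f := fun p : V × V => fermatDist G u p.1 p.2) (mem_univ (x, y))
  exact h

lemma ecc_exists [Fintype V] [Nonempty V] (G : SimpleGraph V) (u : V) :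
    ∃ x y, fermatEcc G u = fermatDist G u x y := by
  obtain ⟨p, _, hp⟩ := Finset.exists_mem_eq_sup (univ : Finset (V × V)) univ_nonempty
    (fun p : V × V => fermatDist G u p.1 p.2)
  exact ⟨p.1, p.2, hp⟩

end Fermat

section Branch
variable [Fintype V] {T : SimpleGraph V}

/-- The branch at `v` in direction `c`: vertices whose geodesic to `v` passes `c`. -/
noncomputable def Bset (T : SimpleGraph V) [Fintype V] (v c : V) : Finset V :=
  univ.filter (fun u => T.dist u v = T.dist u c + 1)

lemma mem_Bset {v c u : V} : u ∈ Bset T v c ↔ T.dist u v = T.dist u c + 1 := by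
  simp [Bset]

lemma adj_dist_cases (hT : T.IsTree) {a b : V} (h : T.Adj a b) (z : V) :
    T.dist z a = T.dist z b + 1 ∨ T.dist z b = T.dist z a + 1 := by
  have hne := tree_adj_dist_ne hT h z
  have hab : T.dist a b = 1 := dist_adj' h
  have t1 : T.dist z a ≤ T.dist z b + T.dist b a := hT.isConnected.dist_triangle
  have t2 : T.dist z b ≤ T.dist z a + T.dist a b := hT.isConnected.dist_triangle
  have c1 : T.dist b a = T.dist a b := dist_comm
  omega

lemma not_mem_Bset (hT : T.IsTree) {v c : V} (h : T.Adj v c) {z : V} (hz : z ∉ Bset T v c) :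
    T.dist z c = T.dist z v + 1 := by
  rcases adj_dist_cases hT h z with h' | h'
  · exact absurd (mem_Bset.2 h') hz
  · exact h'

lemma Bset_self (h : v ≠ c) : v ∉ Bset T v c := by
  intro hv
  rw [mem_Bset] at hv
  have : T.dist v v = 0 := dist_self
  omega

/-- separation: distances from a branch to the outside go through `v`. -/
lemma branch_sep (hT : T.IsTree) {v c : V} (h : T.Adj v c) :
    ∀ u z, u ∈ Bset T v c → z ∉ Bset T v c → T.dist u z = T.dist u v + T.dist v z := by
  suffices H : ∀ N u z, T.dist u z ≤ N → u ∈ Bset T v c → z ∉ Bset T v c →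
      T.dist u z = T.dist u v + T.dist v z from fun u z hu hz => H _ u z le_rfl hu hz
  intro N
  induction N with
  | zero =>
    intro u z huz hu hz
    have h0 : T.dist u z = 0 := by omega
    have := hT.isConnected.dist_eq_zero_iff.1 h0
    subst this
    exact absurd hu hz
  | succ N ih =>
    intro u z huz hu hz
    rw [mem_Bset] at hu
    have hzc := not_mem_Bset hT h hz
    have huz' : u ≠ z := by
      intro he; subst he; rw [mem_Bset] at hz; omega
    by_cases huc : u = c
    · subst huc
      have c1 : T.dist u z = T.dist z u := dist_comm
      have c2 : T.dist v z = T.dist z v := dist_comm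
      have c3 : T.dist u v = T.dist v u := dist_comm
      have c4 : T.dist v u = 1 := dist_adj' h
      omega
    · obtain ⟨w, hadj, q, hq⟩ := Walk.exists_eq_cons_of_ne huz' (geo hT u z)
      have hqp : q.IsPath := by
        have := geo_isPath hT u z
        rw [hq] at this
        exact this.of_cons
      have hql : q.length = T.dist w z := tree_path_length hT q hqp
      have hlen : T.dist w z + 1 = T.dist u z := by
        have := geo_length hT u z
        rw [hq] at this
        simp at this
        omega
      have hdw : T.dist u w = 1 := dist_adj' hadj
      by_cases hw : w ∈ Bset T v c
      · have hih := ih w z (by omega) hw hz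
        have t1 : T.dist u v ≤ T.dist u w + T.dist w v := hT.isConnected.dist_triangle
        have t2 : T.dist u z ≤ T.dist u v + T.dist v z := hT.isConnected.dist_triangle
        omega
      · -- impossible: derive two distinct paths
        exfalso
        have hwc := not_mem_Bset hT h hw
        rw [mem_Bset] at hw
        have t1 : T.dist u v ≤ T.dist u w + T.dist w v := hT.isConnected.dist_triangle
        have t2 : T.dist w c ≤ T.dist w u + T.dist u c := hT.isConnected.dist_triangle
        have c5 : T.dist w u = T.dist u w := dist_comm
        have hwv : T.dist w v = T.dist u c := by omega
        have hwc2 : T.dist w c = T.dist u c + 1 := by omega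
        have hp1 : (Walk.cons hadj.symm (geo hT u c)).IsPath := by
          rw [Walk.cons_isPath_iff]
          refine ⟨geo_isPath hT u c, ?_⟩
          intro hmem
          have := geo_split hT hmem
          have c6 : T.dist u w = T.dist w u := dist_comm
          omega
        have hp2 : ((geo hT w v).append (Walk.cons h Walk.nil)).IsPath := by
          rw [Walk.isPath_def, Walk.support_append, List.nodup_append]
          refine ⟨(geo_isPath hT w v).2, by simp, ?_⟩
          simp only [Walk.support_cons, Walk.support_nil, List.tail_cons]
          intro a ha b hb hab
          simp only [List.mem_singleton] at hb
          rw [hab, hb] at ha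
          have hsplit := geo_split hT ha
          have c7 : T.dist v c = 1 := dist_adj' h
          have c8 : T.dist c v = T.dist v c := SimpleGraph.dist_comm
          omega
        have hpe := (hT.existsUnique_path w c).unique hp1 hp2
        have hu1 : u ∈ (Walk.cons hadj.symm (geo hT u c)).support := by
          simp [Walk.support_cons]
        rw [hpe] at hu1
        rw [Walk.mem_support_append_iff] at hu1
        rcases hu1 with hu1 | hu1
        · have := geo_split hT hu1
          have c8 : T.dist w u = T.dist u w := dist_comm
          omega
        · simp only [Walk.support_cons, Walk.support_nil, List.mem_cons,
            List.mem_singleton, List.not_mem_nil, or_false] at hu1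
          rcases hu1 with rfl | rfl
          · have : T.dist u u = 0 := dist_self
            omega
          · exact huc rfl

lemma Bset_disjoint (hT : T.IsTree) {v c1 c2 : V} (h1 : T.Adj v c1) (h2 : T.Adj v c2)
    (hne : c1 ≠ c2) {u : V} (hu1 : u ∈ Bset T v c1) (hu2 : u ∈ Bset T v c2) : False := by
  have hc2 : c2 ∉ Bset T v c1 := by
    rw [mem_Bset]
    intro he
    have e1 : T.dist c2 v = 1 := by rw [dist_comm]; exact dist_adj' h2
    have e2 : T.dist c2 c1 = 0 := by omega
    exact hne (hT.isConnected.dist_eq_zero_iff.1 e2).symm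
  have := branch_sep hT h1 u c2 hu1 hc2
  rw [mem_Bset] at hu2
  have e1 : T.dist v c2 = 1 := dist_adj' h2
  omega

end Branch

section Leaves
variable [Fintype V] [DecidableEq V] {T : SimpleGraph V} [DecidableRel T.Adj]

lemma deg_pos (hT : T.IsTree) [Nontrivial V] (u : V) : 0 < T.degree u := by
  obtain ⟨v, hv⟩ := exists_ne u
  rw [T.degree_pos_iff_exists_adj]
  obtain ⟨w, hadj, q, hq⟩ := Walk.exists_eq_cons_of_ne (Ne.symm hv) (geo hT u v)
  exact ⟨w, hadj⟩

lemma exists_leaf_in (hT : T.IsTree) [Nontrivial V] {S : Finset V} {v : V} (hne : S.Nonempty)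
    (hv : v ∉ S)
    (hcl : ∀ u ∈ S, ∀ w, T.Adj u w → T.dist v w = T.dist v u + 1 → w ∈ S) :
    ∃ ℓ ∈ S, T.degree ℓ = 1 := by
  obtain ⟨ℓ, hℓS, hmax⟩ := S.exists_max_image (fun u => T.dist v u) hne
  refine ⟨ℓ, hℓS, ?_⟩
  have hdown : ∀ w, T.Adj ℓ w → T.dist v w + 1 = T.dist v ℓ := by
    intro w hw
    rcases adj_dist_cases hT hw v with h' | h'
    · omega
    · exact absurd (hmax w (hcl ℓ hℓS w hw h')) (by omega)
  have hle : T.degree ℓ ≤ 1 := by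
    rw [← T.card_neighborFinset_eq_degree]
    apply Finset.card_le_one.2
    intro a ha b hb
    rw [mem_neighborFinset] at ha hb
    exact tree_unique_down hT ha hb (hdown a ha) (hdown b hb)
  have := deg_pos hT ℓ
  omega

lemma fermatDist_swap (G : SimpleGraph V) (u a b : V) :
    fermatDist G u a b = fermatDist G u b a := by
  unfold fermatDist
  exact iInf_congr (fun σ => by omega)

/-- THE DOWN LEMMA: every branch contains a leaf with at least the Fermat eccentricity
of the branch point. -/
lemma down_lemma (hT : T.IsTree) (hn : 2 ≤ Fintype.card V) {v c : V} (h : T.Adj v c) :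
    ∃ ℓ ∈ Bset T v c, T.degree ℓ = 1 ∧ fermatEcc T v ≤ fermatEcc T ℓ := by
  have hnt : Nontrivial V := Fintype.one_lt_card_iff_nontrivial.1 hn
  have hne : Nonempty V := inferInstance
  obtain ⟨x, y, hxy⟩ := ecc_exists T v
  have hvc : v ∉ Bset T v c := Bset_self h.ne
  have hclB : ∀ u ∈ Bset T v c, ∀ w, T.Adj u w → T.dist v w = T.dist v u + 1 →
      w ∈ Bset T v c := by
    intro u hu w hw hd
    rw [mem_Bset] at hu ⊢
    have t1 : T.dist w c ≤ T.dist w u + T.dist u c := hT.isConnected.dist_triangle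
    have t2 : T.dist w v ≤ T.dist w c + T.dist c v := hT.isConnected.dist_triangle
    have e1 : T.dist w u = 1 := by rw [SimpleGraph.dist_comm]; exact dist_adj' hw
    have e2 : T.dist c v = 1 := by rw [SimpleGraph.dist_comm]; exact dist_adj' h
    have c1 : T.dist w v = T.dist v w := SimpleGraph.dist_comm
    have c2 : T.dist u v = T.dist v u := SimpleGraph.dist_comm
    omega
  -- helper closing the bound, given a leaf with the right distance property
  have key : ∀ x' y', fermatEcc T v = fermatDist T v x' y' → x' ∈ Bset T v c →
      ∃ ℓ ∈ Bset T v c, T.degree ℓ = 1 ∧ fermatEcc T v ≤ fermatEcc T ℓ := by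
    intro x' y' hxy' hx'
    set Sx : Finset V := univ.filter (fun u => T.dist u v = T.dist u x' + T.dist x' v)
      with hSx
    have hmemS : ∀ u, u ∈ Sx ↔ T.dist u v = T.dist u x' + T.dist x' v := by
      intro u; simp [hSx]
    have hx'v : x' ≠ v := by
      intro he; subst he; exact hvc hx'
    have hSne : Sx.Nonempty := ⟨x', by
      rw [hmemS]
      have : T.dist x' x' = 0 := dist_self
      omega⟩
    have hvS : v ∉ Sx := by
      rw [hmemS]
      have e1 : T.dist v v = 0 := dist_self
      have e2 : T.dist x' v ≠ 0 := by
        intro h0; exact hx'v (hT.isConnected.dist_eq_zero_iff.1 h0)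
      have c1 : T.dist v x' = T.dist x' v := SimpleGraph.dist_comm
      omega
    have hclS : ∀ u ∈ Sx, ∀ w, T.Adj u w → T.dist v w = T.dist v u + 1 → w ∈ Sx := by
      intro u hu w hw hd
      rw [hmemS] at hu ⊢
      have t1 : T.dist w x' ≤ T.dist w u + T.dist u x' := hT.isConnected.dist_triangle
      have t2 : T.dist w v ≤ T.dist w x' + T.dist x' v := hT.isConnected.dist_triangle
      have e1 : T.dist w u = 1 := by rw [SimpleGraph.dist_comm]; exact dist_adj' hw
      have c1 : T.dist w v = T.dist v w := SimpleGraph.dist_comm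
      have c2 : T.dist u v = T.dist v u := SimpleGraph.dist_comm
      omega
    obtain ⟨ℓ, hℓS, hℓdeg⟩ := exists_leaf_in hT hSne hvS hclS
    rw [hmemS] at hℓS
    rw [mem_Bset] at hx'
    have hℓB : ℓ ∈ Bset T v c := by
      rw [mem_Bset]
      have t1 : T.dist ℓ c ≤ T.dist ℓ x' + T.dist x' c := hT.isConnected.dist_triangle
      have t2 : T.dist ℓ v ≤ T.dist ℓ c + T.dist c v := hT.isConnected.dist_triangle
      have e2 : T.dist c v = 1 := by rw [SimpleGraph.dist_comm]; exact dist_adj' h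
      omega
    refine ⟨ℓ, hℓB, hℓdeg, ?_⟩
    -- 2 ε v = 2F(v,x',y') ≤ per(v,x',y') ≤ per(ℓ,v,y') ≤ 2F(ℓ,v,y') ≤ 2 ε ℓ
    have h1 : 2 * fermatDist T v x' y' ≤ T.dist v x' + T.dist v y' + T.dist x' y' :=
      two_fermatDist_le_per hT v x' y'
    have h2 : T.dist ℓ v + T.dist ℓ y' + T.dist v y' ≤ 2 * fermatDist T ℓ v y' :=
      per_le_two_fermatDist hT.isConnected ℓ v y'
    have h3 : fermatDist T ℓ v y' ≤ fermatEcc T ℓ := fermatDist_le_ecc T ℓ v y'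
    have t1 : T.dist x' y' ≤ T.dist x' ℓ + T.dist ℓ y' := hT.isConnected.dist_triangle
    have c1 : T.dist x' ℓ = T.dist ℓ x' := SimpleGraph.dist_comm
    have c2 : T.dist v x' = T.dist x' v := SimpleGraph.dist_comm
    omega
  by_cases hx : x ∈ Bset T v c
  · exact key x y hxy hx
  · by_cases hy : y ∈ Bset T v c
    · exact key y x (by rw [hxy, fermatDist_swap]) hy
    · -- both outside: any leaf of the branch does it
      have hcB : c ∈ Bset T v c := by
        rw [mem_Bset]
        have e1 : T.dist c v = 1 := by rw [SimpleGraph.dist_comm]; exact dist_adj' h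
        have e2 : T.dist c c = 0 := dist_self
        omega
      obtain ⟨ℓ, hℓB, hℓdeg⟩ := exists_leaf_in hT ⟨c, hcB⟩ hvc hclB
      refine ⟨ℓ, hℓB, hℓdeg, ?_⟩
      have s1 := branch_sep hT h ℓ x hℓB hx
      have s2 := branch_sep hT h ℓ y hℓB hy
      have h1 : 2 * fermatDist T v x y ≤ T.dist v x + T.dist v y + T.dist x y :=
        two_fermatDist_le_per hT v x y
      have h2 : T.dist ℓ x + T.dist ℓ y + T.dist x y ≤ 2 * fermatDist T ℓ x y :=
        per_le_two_fermatDist hT.isConnected ℓ x y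
      have h3 : fermatDist T ℓ x y ≤ fermatEcc T ℓ := fermatDist_le_ecc T ℓ x y
      omega

/-- Two distinct leaves attaining the maximum Fermat eccentricity. -/
lemma exists_two_max_leaves (hT : T.IsTree) (hn : 2 ≤ Fintype.card V) :
    ∃ r ℓ2, r ≠ ℓ2 ∧ T.degree r = 1 ∧ T.degree ℓ2 = 1 ∧
      (∀ u, fermatEcc T u ≤ fermatEcc T r) ∧ fermatEcc T ℓ2 = fermatEcc T r := by
  have hnt : Nontrivial V := Fintype.one_lt_card_iff_nontrivial.1 hn
  obtain ⟨u0, _, hmax⟩ := (univ : Finset V).exists_max_image (fun u => fermatEcc T u)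
    univ_nonempty
  have hmax' : ∀ u, fermatEcc T u ≤ fermatEcc T u0 := fun u => hmax u (mem_univ u)
  by_cases hdeg : T.degree u0 = 1
  · -- u0 is a leaf; get a second one in its branch
    obtain ⟨c, hc⟩ := T.degree_pos_iff_exists_adj u0 |>.1 (deg_pos hT u0)
    obtain ⟨ℓ, hℓB, hℓdeg, hℓε⟩ := down_lemma hT hn hc
    have hεeq : fermatEcc T ℓ = fermatEcc T u0 := le_antisymm (hmax' ℓ) hℓε
    refine ⟨u0, ℓ, ?_, hdeg, hℓdeg, hmax', hεeq⟩
    intro he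
    rw [← he] at hℓB
    exact Bset_self hc.ne hℓB
  · -- u0 has two neighbors; a max leaf in each branch
    have h2 : 1 < T.degree u0 := by
      have := deg_pos hT u0
      omega
    rw [← T.card_neighborFinset_eq_degree] at h2
    obtain ⟨c1, hc1, c2, hc2, hcne⟩ := Finset.one_lt_card.1 h2
    rw [mem_neighborFinset] at hc1 hc2
    obtain ⟨ℓ1, hℓ1B, hℓ1deg, hℓ1ε⟩ := down_lemma hT hn hc1
    obtain ⟨ℓ2, hℓ2B, hℓ2deg, hℓ2ε⟩ := down_lemma hT hn hc2
    have he1 : fermatEcc T ℓ1 = fermatEcc T u0 := le_antisymm (hmax' ℓ1) hℓ1ε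
    have he2 : fermatEcc T ℓ2 = fermatEcc T u0 := le_antisymm (hmax' ℓ2) hℓ2ε
    refine ⟨ℓ1, ℓ2, ?_, hℓ1deg, hℓ2deg, fun u => by rw [he1]; exact hmax' u, by rw [he1, he2]⟩
    intro he
    rw [he] at hℓ1B
    exact Bset_disjoint hT hc1 hc2 hcne hℓ1B hℓ2B

end Leaves

section Argmax
variable [Fintype V] {T : SimpleGraph V}

/-- pick the element of `S` maximizing `key`. -/
noncomputable def amax (key : V → ℕ) (df : V) (S : Finset V) : V :=
  if h : S.Nonempty then
    (Finset.mem_image.mp (Finset.max'_mem (S.image key) (h.image key))).choose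
  else df

lemma amax_mem {key : V → ℕ} {df : V} {S : Finset V} (h : S.Nonempty) :
    amax key df S ∈ S := by
  rw [amax, dif_pos h]
  exact (Finset.mem_image.mp (Finset.max'_mem (S.image key) (h.image key))).choose_spec.1

lemma amax_key {key : V → ℕ} {df : V} {S : Finset V} (h : S.Nonempty) :
    key (amax key df S) = (S.image key).max' (h.image key) := by
  rw [amax, dif_pos h]
  exact (Finset.mem_image.mp (Finset.max'_mem (S.image key) (h.image key))).choose_spec.2

lemma amax_le {key : V → ℕ} {df : V} {S : Finset V} (h : S.Nonempty) {x : V} (hx : x ∈ S) :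
    key x ≤ key (amax key df S) := by
  rw [amax_key (key := key) (df := df) h]
  exact Finset.le_max' _ _ (Finset.mem_image_of_mem key hx)

lemma amax_eq {key : V → ℕ} (hinj : Function.Injective key) {df : V} {S : Finset V}
    {x : V} (hx : x ∈ S) (hmax : ∀ y ∈ S, key y ≤ key x) : amax key df S = x := by
  have h : S.Nonempty := ⟨x, hx⟩
  apply hinj
  exact le_antisymm (hmax _ (amax_mem h)) (amax_le h hx)

/-- the tie-breaking key. -/
noncomputable def tkey (T : SimpleGraph V) [Fintype V] : V → ℕ :=
  fun u => Fintype.card V * fermatEcc T u + ((Fintype.equivFin V) u : ℕ)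

lemma tkey_le_ecc {x y : V} (h : tkey T x ≤ tkey T y) : fermatEcc T x ≤ fermatEcc T y := by
  by_contra hlt
  push_neg at hlt
  unfold tkey at h
  have hx : ((Fintype.equivFin V) x : ℕ) < Fintype.card V := ((Fintype.equivFin V) x).2
  have hy : ((Fintype.equivFin V) y : ℕ) < Fintype.card V := ((Fintype.equivFin V) y).2
  have : Fintype.card V * (fermatEcc T y + 1) ≤ Fintype.card V * fermatEcc T x :=
    Nat.mul_le_mul_left _ hlt
  have h2 : Fintype.card V * fermatEcc T y + Fintype.card V ≤
      Fintype.card V * fermatEcc T x := by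
    rw [Nat.mul_succ] at this
    omega
  omega

lemma tkey_inj : Function.Injective (tkey T) := by
  intro a b h
  have h1 : fermatEcc T a = fermatEcc T b :=
    le_antisymm (tkey_le_ecc h.le) (tkey_le_ecc h.ge)
  unfold tkey at h
  rw [h1] at h
  have : ((Fintype.equivFin V) a : ℕ) = ((Fintype.equivFin V) b : ℕ) := by omega
  exact (Fintype.equivFin V).injective (Fin.ext this)

end Argmax

section Nesting
variable [Fintype V] {T : SimpleGraph V}

lemma r_not_mem_Bset {r v c : V} (hrc : T.dist r c = T.dist r v + 1) : r ∉ Bset T v c := by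
  rw [mem_Bset]
  omega

lemma Bset_root_dist (hT : T.IsTree) {r v c : V} (hc : T.Adj v c)
    (hrc : T.dist r c = T.dist r v + 1) {u : V} (hu : u ∈ Bset T v c) :
    T.dist r u = T.dist r v + T.dist v u := by
  have := branch_sep hT hc u r hu (r_not_mem_Bset hrc)
  have c1 : T.dist u r = T.dist r u := SimpleGraph.dist_comm
  have c2 : T.dist v r = T.dist r v := SimpleGraph.dist_comm
  have c3 : T.dist u v = T.dist v u := SimpleGraph.dist_comm
  omega

lemma Bset_nested (hT : T.IsTree) {r v c v' c' : V} (hc : T.Adj v c)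
    (hrc : T.dist r c = T.dist r v + 1) (hc' : T.Adj v' c')
    (hrc' : T.dist r c' = T.dist r v' + 1) (hv' : v' ∈ Bset T v c) :
    Bset T v' c' ⊆ Bset T v c := by
  have hvv' : v ≠ v' := by
    intro he; subst he; exact Bset_self hc.ne hv'
  have hdd := Bset_root_dist hT hc hrc hv'
  have hvB' : v ∉ Bset T v' c' := by
    intro hv
    have := Bset_root_dist hT hc' hrc' hv
    have c1 : T.dist v v' = T.dist v' v := SimpleGraph.dist_comm
    have hz : T.dist v v' = 0 := by omega
    exact hvv' (hT.isConnected.dist_eq_zero_iff.1 hz)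
  have hcB' : c ∉ Bset T v' c' := by
    intro hcc
    have h1 := Bset_root_dist hT hc' hrc' hcc
    have hd1 : T.dist v v' ≠ 0 := by
      intro hz; exact hvv' (hT.isConnected.dist_eq_zero_iff.1 hz)
    have hveq : v' = c := by
      have c1 : T.dist v v' = T.dist v' v := SimpleGraph.dist_comm
      have hz : T.dist v' c = 0 := by omega
      exact hT.isConnected.dist_eq_zero_iff.1 hz
    subst hveq
    exact Bset_self hc'.ne hcc
  intro u hu
  have e1 := branch_sep hT hc' u v hu hvB'
  have e2 := branch_sep hT hc' u c hu hcB'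
  rw [mem_Bset] at hv' ⊢
  omega

end Nesting

section Children
variable [Fintype V] [DecidableEq V] {T : SimpleGraph V} [DecidableRel T.Adj]

/-- children of `v` away from root `r`. -/
noncomputable def Cset (T : SimpleGraph V) [Fintype V] [DecidableRel T.Adj] (r v : V) :
    Finset V :=
  (T.neighborFinset v).filter (fun c => T.dist r c = T.dist r v + 1)

lemma mem_Cset {r v c : V} : c ∈ Cset T r v ↔ T.Adj v c ∧ T.dist r c = T.dist r v + 1 := by
  simp [Cset, mem_neighborFinset]

/-- leaves of the branch. -/
noncomputable def LBset (T : SimpleGraph V) [Fintype V] [DecidableRel T.Adj] (v c : V) :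
    Finset V :=
  (Bset T v c).filter (fun ℓ => T.degree ℓ = 1)

lemma mem_LBset {v c ℓ : V} : ℓ ∈ LBset T v c ↔ ℓ ∈ Bset T v c ∧ T.degree ℓ = 1 := by
  simp [LBset]

noncomputable def lamv (T : SimpleGraph V) [Fintype V] [DecidableEq V] [DecidableRel T.Adj]
    (r v c : V) : V := amax (tkey T) r (LBset T v c)

noncomputable def lbig (T : SimpleGraph V) [Fintype V] [DecidableEq V] [DecidableRel T.Adj]
    (r v : V) : V := amax (tkey T) r ((Cset T r v).biUnion (fun c => LBset T v c))

noncomputable def LeavesF (T : SimpleGraph V) [Fintype V] [DecidableRel T.Adj] : Finset V :=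
  univ.filter (fun u => T.degree u = 1)

noncomputable def lstar (T : SimpleGraph V) [Fintype V] [DecidableEq V] [DecidableRel T.Adj]
    (r : V) : V := amax (tkey T) r ((LeavesF T).erase r)

lemma LBset_nonempty (hT : T.IsTree) (hn : 2 ≤ Fintype.card V) {v c : V} (h : T.Adj v c) :
    (LBset T v c).Nonempty := by
  obtain ⟨ℓ, h1, h2, _⟩ := down_lemma hT hn h
  exact ⟨ℓ, mem_LBset.2 ⟨h1, h2⟩⟩

lemma lamv_mem (hT : T.IsTree) (hn : 2 ≤ Fintype.card V) {r v c : V} (h : T.Adj v c) :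
    lamv T r v c ∈ LBset T v c := amax_mem (LBset_nonempty hT hn h)

lemma lamv_eps (hT : T.IsTree) (hn : 2 ≤ Fintype.card V) {r v c : V} (h : T.Adj v c) :
    fermatEcc T v ≤ fermatEcc T (lamv T r v c) := by
  obtain ⟨ℓ, h1, h2, h3⟩ := down_lemma hT hn h
  have hm : ℓ ∈ LBset T v c := mem_LBset.2 ⟨h1, h2⟩
  have := amax_le (key := tkey T) (df := r) ⟨ℓ, hm⟩ hm
  exact le_trans h3 (tkey_le_ecc this)

lemma child_card (hT : T.IsTree) {r v : V} (hv : v ≠ r) :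
    (Cset T r v).card + 1 = T.degree v := by
  obtain ⟨w, hadj, q, hq⟩ := Walk.exists_eq_cons_of_ne hv (geo hT v r)
  have hqp : q.IsPath := by
    have := geo_isPath hT v r; rw [hq] at this; exact this.of_cons
  have hql : q.length = T.dist w r := tree_path_length hT q hqp
  have hlen : T.dist w r + 1 = T.dist v r := by
    have := geo_length hT v r; rw [hq] at this; simp at this; omega
  have hcomm : ∀ a b : V, T.dist a b = T.dist b a := fun a b => SimpleGraph.dist_comm
  have hneg : (T.neighborFinset v).filter (fun c => ¬(T.dist r c = T.dist r v + 1)) = {w} := by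
    ext c
    simp only [mem_filter, mem_neighborFinset, Finset.mem_singleton]
    constructor
    · rintro ⟨hcadj, hcd⟩
      rcases adj_dist_cases hT hcadj r with h' | h'
      · exact tree_unique_down hT (v := r) hcadj hadj (by omega)
          (by rw [hcomm r w, hcomm r v]; omega)
      · exact absurd h' hcd
    · rintro rfl
      refine ⟨hadj, ?_⟩
      have h1 := hcomm r c
      have h2 := hcomm r v
      omega
  have hsplit := Finset.card_filter_add_card_filter_not
    (s := T.neighborFinset v) (p := fun c => T.dist r c = T.dist r v + 1)
  have hsplit' : ((T.neighborFinset v).filter (fun c => T.dist r c = T.dist r v + 1)).card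
      + ((T.neighborFinset v).filter (fun c => ¬(T.dist r c = T.dist r v + 1))).card
      = (T.neighborFinset v).card := hsplit
  rw [hneg] at hsplit'
  simp only [Finset.card_singleton] at hsplit'
  rw [← T.card_neighborFinset_eq_degree]
  have hCeq : Cset T r v
      = (T.neighborFinset v).filter (fun c => T.dist r c = T.dist r v + 1) := rfl
  rw [hCeq]
  omega

lemma lamv_ne_lstar (hT : T.IsTree) (hn : 2 ≤ Fintype.card V) {r v c : V}
    (hc : c ∈ Cset T r v) (hns : lamv T r v c ≠ lbig T r v) : lamv T r v c ≠ lstar T r := by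
  intro he
  apply hns
  obtain ⟨hcadj, hcd⟩ := mem_Cset.1 hc
  have hlmem := lamv_mem hT hn (r := r) hcadj
  have hUmem : lamv T r v c ∈ (Cset T r v).biUnion (fun c => LBset T v c) :=
    Finset.mem_biUnion.2 ⟨c, hc, hlmem⟩
  have hkeymax : ∀ y ∈ (Cset T r v).biUnion (fun c => LBset T v c),
      tkey T y ≤ tkey T (lamv T r v c) := by
    intro y hy
    obtain ⟨c'', hc'', hy'⟩ := Finset.mem_biUnion.1 hy
    obtain ⟨hyB, hydeg⟩ := mem_LBset.1 hy'
    obtain ⟨hadj'', hcd''⟩ := mem_Cset.1 hc''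
    have hyr : y ≠ r := by
      intro hyr; subst hyr
      exact r_not_mem_Bset hcd'' hyB
    have hyL : y ∈ (LeavesF T).erase r := by
      simp [LeavesF, Finset.mem_erase, hyr, hydeg]
    have := amax_le (key := tkey T) (df := r) ⟨y, hyL⟩ hyL
    rw [← lstar, ← he] at this
    exact this
  exact (amax_eq tkey_inj hUmem hkeymax).symm

lemma special_count (hT : T.IsTree) (hn : 2 ≤ Fintype.card V) {r v : V}
    (hrdeg : T.degree r = 1) (h3 : 3 ≤ T.degree v) :
    ((Cset T r v).filter (fun c => lamv T r v c ≠ lbig T r v)).card + 2 = T.degree v := by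
  have hv : v ≠ r := by intro he; subst he; omega
  have hcard := child_card (T := T) hT hv
  have hCne : (Cset T r v).Nonempty := Finset.card_pos.1 (by omega)
  obtain ⟨ca, hca⟩ := hCne
  have hUne : ((Cset T r v).biUnion (fun c => LBset T v c)).Nonempty := by
    obtain ⟨ℓ, hℓ⟩ := LBset_nonempty hT hn (mem_Cset.1 hca).1
    exact ⟨ℓ, Finset.mem_biUnion.2 ⟨ca, hca, hℓ⟩⟩
  have hbigmem : lbig T r v ∈ (Cset T r v).biUnion (fun c => LBset T v c) := amax_mem hUne
  obtain ⟨c0, hc0, hbig0⟩ := Finset.mem_biUnion.1 hbigmem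
  have hlam0 : lamv T r v c0 = lbig T r v := by
    apply amax_eq tkey_inj hbig0
    intro y hy
    exact amax_le hUne (Finset.mem_biUnion.2 ⟨c0, hc0, hy⟩)
  have hfilter : (Cset T r v).filter (fun c => lamv T r v c ≠ lbig T r v)
      = (Cset T r v).erase c0 := by
    ext c
    simp only [mem_filter, Finset.mem_erase]
    constructor
    · rintro ⟨hcC, hcne⟩
      refine ⟨?_, hcC⟩
      intro he; subst he; exact hcne hlam0
    · rintro ⟨hcne, hcC⟩
      refine ⟨hcC, ?_⟩
      intro he
      rw [← hlam0] at he
      have h1 := lamv_mem hT hn (r := r) (mem_Cset.1 hcC).1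
      have h2 := lamv_mem hT hn (r := r) (mem_Cset.1 hc0).1
      rw [he] at h1
      exact Bset_disjoint hT (mem_Cset.1 hcC).1 (mem_Cset.1 hc0).1 hcne
        (mem_LBset.1 h1).1 (mem_LBset.1 h2).1
  rw [hfilter, Finset.card_erase_of_mem hc0]
  have hpos : 0 < (Cset T r v).card := Finset.card_pos.2 ⟨c0, hc0⟩
  omega

/-- global injectivity of the assignment of leaves to non-special children. -/
lemma lamv_inj (hT : T.IsTree) (hn : 2 ≤ Fintype.card V) {r : V} {v c v' c' : V}
    (hc : c ∈ Cset T r v) (hc' : c' ∈ Cset T r v')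
    (hns : lamv T r v c ≠ lbig T r v) (hns' : lamv T r v' c' ≠ lbig T r v')
    (heq : lamv T r v c = lamv T r v' c') : v = v' ∧ c = c' := by
  obtain ⟨hadj, hrc⟩ := mem_Cset.1 hc
  obtain ⟨hadj', hrc'⟩ := mem_Cset.1 hc'
  have hm := lamv_mem hT hn (r := r) hadj
  have hm' := lamv_mem hT hn (r := r) hadj'
  have hmB := (mem_LBset.1 hm).1
  have hmB' := (mem_LBset.1 hm').1
  rw [heq] at hmB
  -- hmB : lamv T r v' c' ∈ Bset T v c ; hmB' : lamv T r v' c' ∈ Bset T v' c'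
  by_cases hvv : v = v'
  · subst hvv
    refine ⟨rfl, ?_⟩
    by_contra hcc
    exact Bset_disjoint hT hadj hadj' hcc hmB hmB'
  · exfalso
    by_cases hv'B : v' ∈ Bset T v c
    · -- nested: all branches of v' inside Bset v c, so lamv v' c' is the big one at v'
      apply hns'
      have hUne : ((Cset T r v').biUnion (fun c => LBset T v' c)).Nonempty :=
        ⟨lamv T r v' c', Finset.mem_biUnion.2 ⟨c', hc', hm'⟩⟩
      apply (amax_eq tkey_inj (Finset.mem_biUnion.2 ⟨c', hc', hm'⟩) ?_).symm
      intro y hy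
      obtain ⟨c'', hc'', hy'⟩ := Finset.mem_biUnion.1 hy
      obtain ⟨hadj'', hrc''⟩ := mem_Cset.1 hc''
      have hsub := Bset_nested hT hadj hrc hadj'' hrc'' hv'B
      have hyLB : y ∈ LBset T v c :=
        mem_LBset.2 ⟨hsub (mem_LBset.1 hy').1, (mem_LBset.1 hy').2⟩
      have := amax_le (key := tkey T) (df := r) ⟨y, hyLB⟩ hyLB
      rw [← lamv, heq] at this
      exact this
    · by_cases hvB : v ∈ Bset T v' c'
      · apply hns
        have hUne : ((Cset T r v).biUnion (fun c => LBset T v c)).Nonempty :=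
          ⟨lamv T r v c, Finset.mem_biUnion.2 ⟨c, hc, hm⟩⟩
        rw [← heq] at hmB'
        apply (amax_eq tkey_inj (Finset.mem_biUnion.2 ⟨c, hc, hm⟩) ?_).symm
        intro y hy
        obtain ⟨c'', hc'', hy'⟩ := Finset.mem_biUnion.1 hy
        obtain ⟨hadj'', hrc''⟩ := mem_Cset.1 hc''
        have hsub := Bset_nested hT hadj' hrc' hadj'' hrc'' hvB
        have hyLB : y ∈ LBset T v' c' :=
          mem_LBset.2 ⟨hsub (mem_LBset.1 hy').1, (mem_LBset.1 hy').2⟩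
        have := amax_le (key := tkey T) (df := r) ⟨y, hyLB⟩ hyLB
        rw [← lamv, ← heq] at this
        exact this
      · -- separated both ways: distance contradiction
        have e1 := branch_sep hT hadj (lamv T r v' c') v' hmB hv'B
        have e2 := branch_sep hT hadj' (lamv T r v' c') v hmB' hvB
        have c1 : T.dist v v' = T.dist v' v := SimpleGraph.dist_comm
        have hz : T.dist v v' = 0 := by omega
        exact hvv (hT.isConnected.dist_eq_zero_iff.1 hz)

end Children

section Core
variable [Fintype V] [DecidableEq V] {T : SimpleGraph V} [DecidableRel T.Adj]

lemma core_count (hT : T.IsTree) (hn : 2 ≤ Fintype.card V) :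
    ∃ r : V, (∀ u, fermatEcc T u ≤ fermatEcc T r) ∧
      2 * ((fermatEcc T r : ℚ))^2 ≤
        ∑ u : V, (2 - (T.degree u : ℚ)) * ((fermatEcc T u : ℚ))^2 := by
  have hnt : Nontrivial V := Fintype.one_lt_card_iff_nontrivial.1 hn
  obtain ⟨r, ℓ2, hrl2, hrdeg, hl2deg, hrmax, hl2eq⟩ := exists_two_max_leaves hT hn
  refine ⟨r, hrmax, ?_⟩
  set f : V → ℚ := fun u => ((fermatEcc T u : ℚ))^2 with hf
  have hfnn : ∀ u, 0 ≤ f u := fun u => by positivity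
  have hfmono : ∀ a b : V, fermatEcc T a ≤ fermatEcc T b → f a ≤ f b := by
    intro a b h
    simp only [hf]
    have h' : ((fermatEcc T a : ℚ)) ≤ (fermatEcc T b : ℚ) := by exact_mod_cast h
    exact pow_le_pow_left₀ (by positivity) h' 2
  have hl2mem : ℓ2 ∈ (LeavesF T).erase r := by
    rw [Finset.mem_erase]
    exact ⟨Ne.symm hrl2, by simp [LeavesF, hl2deg]⟩
  have hLne : ((LeavesF T).erase r).Nonempty := ⟨ℓ2, hl2mem⟩
  have hstar_mem : lstar T r ∈ (LeavesF T).erase r := amax_mem hLne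
  have hstar_eps : fermatEcc T (lstar T r) = fermatEcc T r := by
    have h1 := tkey_le_ecc (amax_le (key := tkey T) (df := r) hLne hl2mem)
    have h2 := hrmax (lstar T r)
    rw [hl2eq] at h1
    exact le_antisymm h2 (by rw [lstar] at *; omega)
  set P : Finset (V × V) := (univ ×ˢ univ).filter
    (fun p => 3 ≤ T.degree p.1 ∧ p.2 ∈ Cset T r p.1 ∧ lamv T r p.1 p.2 ≠ lbig T r p.1) with hP
  have hmemP : ∀ {p : V × V}, p ∈ P ↔
      3 ≤ T.degree p.1 ∧ p.2 ∈ Cset T r p.1 ∧ lamv T r p.1 p.2 ≠ lbig T r p.1 := by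
    intro p
    rw [hP, Finset.mem_filter]
    simp
  have himg : ∀ p ∈ P, lamv T r p.1 p.2 ∈ (((LeavesF T).erase r).erase (lstar T r)) := by
    intro p hp
    obtain ⟨h3, hcC, hns⟩ := hmemP.1 hp
    obtain ⟨hadj, hrc⟩ := mem_Cset.1 hcC
    have hm := lamv_mem hT hn (r := r) hadj
    obtain ⟨hB, hdeg1⟩ := mem_LBset.1 hm
    have hner : lamv T r p.1 p.2 ≠ r := by
      intro he; rw [he] at hB; exact r_not_mem_Bset hrc hB
    have hnestar := lamv_ne_lstar hT hn hcC hns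
    rw [Finset.mem_erase, Finset.mem_erase]
    exact ⟨hnestar, hner, by simp [LeavesF, hdeg1]⟩
  have S1 : ∑ p ∈ P, f p.1 ≤ ∑ p ∈ P, f (lamv T r p.1 p.2) := by
    apply Finset.sum_le_sum
    intro p hp
    exact hfmono _ _ (lamv_eps hT hn (mem_Cset.1 (hmemP.1 hp).2.1).1)
  have S2 : ∑ p ∈ P, f (lamv T r p.1 p.2)
      = ∑ ℓ ∈ P.image (fun p => lamv T r p.1 p.2), f ℓ := by
    rw [Finset.sum_image]
    intro p hp q hq heq
    obtain ⟨h3p, hcp, hnsp⟩ := hmemP.1 hp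
    obtain ⟨h3q, hcq, hnsq⟩ := hmemP.1 hq
    obtain ⟨hv, hc⟩ := lamv_inj hT hn hcp hcq hnsp hnsq heq
    exact Prod.ext hv hc
  have S3 : ∑ ℓ ∈ P.image (fun p => lamv T r p.1 p.2), f ℓ
      ≤ ∑ ℓ ∈ ((LeavesF T).erase r).erase (lstar T r), f ℓ := by
    apply Finset.sum_le_sum_of_subset_of_nonneg
    · intro ℓ hℓ
      obtain ⟨p, hp, rfl⟩ := Finset.mem_image.1 hℓ
      exact himg p hp
    · intro i _ _; exact hfnn i
  have S5 : ∑ p ∈ P, f p.1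
      = ∑ v ∈ univ.filter (fun v => 3 ≤ T.degree v), ((T.degree v : ℚ) - 2) * f v := by
    rw [hP, Finset.sum_filter, Finset.sum_product]
    have hinner : ∀ v : V,
        (∑ c : V, if 3 ≤ T.degree v ∧ c ∈ Cset T r v ∧ lamv T r v c ≠ lbig T r v
          then f v else 0)
        = if 3 ≤ T.degree v then ((T.degree v : ℚ) - 2) * f v else 0 := by
      intro v
      by_cases h3 : 3 ≤ T.degree v
      · rw [if_pos h3]
        have hstep1 : (∑ c : V, if 3 ≤ T.degree v ∧ c ∈ Cset T r v ∧
            lamv T r v c ≠ lbig T r v then f v else 0)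
            = ∑ c ∈ univ.filter (fun c => 3 ≤ T.degree v ∧ c ∈ Cset T r v ∧
                lamv T r v c ≠ lbig T r v), f v := (Finset.sum_filter _ _).symm
        have hsets : univ.filter (fun c => 3 ≤ T.degree v ∧ c ∈ Cset T r v ∧
            lamv T r v c ≠ lbig T r v)
            = (Cset T r v).filter (fun c => lamv T r v c ≠ lbig T r v) := by
          ext c
          simp [Finset.mem_filter, h3]
        rw [hstep1, hsets, Finset.sum_const, nsmul_eq_mul]
        have hcount := special_count hT hn (r := r) hrdeg h3
        have hcast : ((((Cset T r v).filter
            (fun c => lamv T r v c ≠ lbig T r v)).card : ℚ)) = (T.degree v : ℚ) - 2 := by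
          have h2 : (((Cset T r v).filter (fun c => lamv T r v c ≠ lbig T r v)).card)
              = T.degree v - 2 := by omega
          rw [h2]
          have : 2 ≤ T.degree v := by omega
          push_cast [Nat.cast_sub this]
          ring
        rw [hcast]
      · rw [if_neg h3]
        apply Finset.sum_eq_zero
        intro c _
        rw [if_neg (by tauto)]
    rw [Finset.sum_congr rfl (fun v _ => hinner v), ← Finset.sum_filter]
  have SB : ∑ v ∈ univ.filter (fun v => 3 ≤ T.degree v), ((T.degree v : ℚ) - 2) * f v
      ≤ ∑ ℓ ∈ ((LeavesF T).erase r).erase (lstar T r), f ℓ := by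
    rw [← S5]
    calc ∑ p ∈ P, f p.1 ≤ ∑ p ∈ P, f (lamv T r p.1 p.2) := S1
      _ = ∑ ℓ ∈ P.image (fun p => lamv T r p.1 p.2), f ℓ := S2
      _ ≤ ∑ ℓ ∈ ((LeavesF T).erase r).erase (lstar T r), f ℓ := S3
  have hdegpos : ∀ u : V, 1 ≤ T.degree u := fun u => deg_pos hT u
  have hpoint : ∀ u : V, (2 - (T.degree u : ℚ)) * f u
      = (if T.degree u = 1 then f u else 0)
        - (if 3 ≤ T.degree u then ((T.degree u : ℚ) - 2) * f u else 0) := by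
    intro u
    rcases Nat.lt_or_ge (T.degree u) 3 with h | h
    · by_cases hdeg1 : T.degree u = 1
      · rw [if_pos hdeg1, if_neg (by omega), hdeg1]
        push_cast
        ring
      · have h2 : T.degree u = 2 := by have := hdegpos u; omega
        rw [if_neg hdeg1, if_neg (by omega), h2]
        push_cast
        ring
    · rw [if_neg (by omega), if_pos h]
      ring
  have hsum : ∑ u : V, (2 - (T.degree u : ℚ)) * f u
      = ∑ ℓ ∈ LeavesF T, f ℓ
        - ∑ v ∈ univ.filter (fun v => 3 ≤ T.degree v), ((T.degree v : ℚ) - 2) * f v := by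
    rw [Finset.sum_congr rfl (fun u _ => hpoint u), Finset.sum_sub_distrib]
    congr 1
    · rw [← Finset.sum_filter]
      rfl
    · rw [← Finset.sum_filter]
  have hrL : r ∈ LeavesF T := by simp [LeavesF, hrdeg]
  have hsplit1 : ∑ ℓ ∈ LeavesF T, f ℓ = f r + ∑ ℓ ∈ (LeavesF T).erase r, f ℓ :=
    (Finset.add_sum_erase _ _ hrL).symm
  have hsplit2 : ∑ ℓ ∈ (LeavesF T).erase r, f ℓ
      = f (lstar T r) + ∑ ℓ ∈ ((LeavesF T).erase r).erase (lstar T r), f ℓ :=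
    (Finset.add_sum_erase _ _ hstar_mem).symm
  have hfstar : f (lstar T r) = f r := by simp [hf, hstar_eps]
  rw [hsum, hsplit1, hsplit2, hfstar]
  have hfr : 2 * f r ≤ f r + (f r + ∑ ℓ ∈ ((LeavesF T).erase r).erase (lstar T r), f ℓ)
      - ∑ v ∈ univ.filter (fun v => 3 ≤ T.degree v), ((T.degree v : ℚ) - 2) * f v := by
    linarith [SB]
  exact hfr

end Core

section EdgeSum
variable [Fintype V] [DecidableEq V] {T : SimpleGraph V} [DecidableRel T.Adj]

lemma edge_sum_two (w : V → V → ℚ) (hw : ∀ a b, w a b = w b a) :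
    ∑ p ∈ (univ ×ˢ univ).filter (fun p : V × V => T.Adj p.1 p.2), w p.1 p.2
      = 2 * ∑ e ∈ T.edgeFinset, Sym2.lift ⟨w, hw⟩ e := by
  rw [← Finset.sum_fiberwise_of_maps_to (g := fun p : V × V => Sym2.mk p.1 p.2)
    (t := T.edgeFinset)
    (fun p hp => by
      rw [mem_edgeFinset]
      have := (Finset.mem_filter.1 hp).2
      exact this) (fun p => w p.1 p.2)]
  rw [Finset.mul_sum]
  apply Finset.sum_congr rfl
  intro e he
  revert he
  refine Sym2.inductionOn e ?_
  intro a b he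
  have hadj : T.Adj a b := (T.mem_edgeSet).1 (mem_edgeFinset.1 he)
  have hne : a ≠ b := hadj.ne
  have hfib : (((univ ×ˢ univ).filter (fun p : V × V => T.Adj p.1 p.2)).filter
      (fun p => Sym2.mk p.1 p.2 = s(a, b))) = {(a, b), (b, a)} := by
    ext q
    obtain ⟨q1, q2⟩ := q
    simp only [Finset.mem_filter, Finset.mem_product, Finset.mem_univ, true_and,
      Finset.mem_insert, Finset.mem_singleton, Prod.mk.injEq]
    constructor
    · rintro ⟨-, h⟩
      rcases Sym2.eq_iff.1 h with ⟨rfl, rfl⟩ | ⟨rfl, rfl⟩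
      · left; exact ⟨rfl, rfl⟩
      · right; exact ⟨rfl, rfl⟩
    · rintro (⟨rfl, rfl⟩ | ⟨rfl, rfl⟩)
      · exact ⟨hadj, rfl⟩
      · exact ⟨hadj.symm, Sym2.eq_swap⟩
  rw [hfib, Finset.sum_insert (by simp [Prod.ext_iff, hne]), Finset.sum_singleton,
    Sym2.lift_mk]
  simp only []
  rw [hw b a]
  ring

lemma pair_sum_deg (f : V → ℚ) :
    ∑ p ∈ (univ ×ˢ univ).filter (fun p : V × V => T.Adj p.1 p.2), f p.1
      = ∑ u : V, (T.degree u : ℚ) * f u := by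
  rw [Finset.sum_filter, Finset.sum_product]
  apply Finset.sum_congr rfl
  intro u _
  rw [← Finset.sum_filter]
  have h0 : (∑ a ∈ univ.filter (fun a => T.Adj (u, a).1 (u, a).2), f (u, a).1)
      = ∑ _a ∈ univ.filter (fun a => T.Adj (u, a).1 (u, a).2), f u :=
    Finset.sum_congr rfl (fun a _ => rfl)
  have h1 : (∑ _a ∈ univ.filter (fun a => T.Adj (u, a).1 (u, a).2), f u)
      = (univ.filter (fun a => T.Adj (u, a).1 (u, a).2)).card • f u := Finset.sum_const _
  have h2 : univ.filter (fun a => T.Adj (u, a).1 (u, a).2) = T.neighborFinset u := by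
    ext x
    simp [mem_neighborFinset]
  rw [h0, h1, h2, T.card_neighborFinset_eq_degree, nsmul_eq_mul]

lemma pair_sum_deg' (f : V → ℚ) :
    ∑ p ∈ (univ ×ˢ univ).filter (fun p : V × V => T.Adj p.1 p.2), f p.2
      = ∑ u : V, (T.degree u : ℚ) * f u := by
  rw [← pair_sum_deg (T := T) f]
  apply Finset.sum_equiv (Equiv.prodComm V V)
  · intro p
    simp only [Finset.mem_filter, Finset.mem_product, Finset.mem_univ, true_and,
      Equiv.prodComm_apply, Prod.fst_swap, Prod.snd_swap]
    exact T.adj_comm _ _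
  · intro p _
    rfl

end EdgeSum


/-- For every finite tree `T` with `n ≥ 2` vertices and `m = n - 1` edges,
`F₂(T)/m ≤ F₁(T)/n`. -/
theorem avg_F2_le_avg_F1_of_tree [Fintype V] (T : SimpleGraph V) (hT : T.IsTree)
    (hn : 2 ≤ Fintype.card V) (hm : numEdges T = Fintype.card V - 1) :
    (F2 T : ℚ) / (numEdges T : ℚ) ≤ (F1 T : ℚ) / (Fintype.card V : ℚ) := by
  letI := Classical.decEq V
  letI := Classical.decRel T.Adj
  have hnt : Nontrivial V := Fintype.one_lt_card_iff_nontrivial.1 hn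
  set f : V → ℚ := fun u => ((fermatEcc T u : ℚ))^2 with hf
  obtain ⟨r, hrmax, hcore⟩ := core_count (T := T) hT hn
  have hF2n : F2 T = ∑ e ∈ T.edgeFinset,
      Sym2.lift ⟨fun u v => fermatEcc T u * fermatEcc T v, fun _ _ => mul_comm _ _⟩ e := rfl
  have hF2cast : (F2 T : ℚ) = ∑ e ∈ T.edgeFinset,
      Sym2.lift ⟨fun a b => (fermatEcc T a : ℚ) * (fermatEcc T b : ℚ),
        fun a b => mul_comm _ _⟩ e := by
    rw [hF2n, Nat.cast_sum]
    apply Finset.sum_congr rfl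
    intro e _
    refine Sym2.inductionOn e ?_
    intro a b
    rw [Sym2.lift_mk, Sym2.lift_mk]
    push_cast
    ring
  have hK1 : 2 * (F2 T : ℚ) ≤ ∑ u : V, (T.degree u : ℚ) * f u := by
    rw [hF2cast, ← edge_sum_two (T := T) _ _]
    have hle : ∑ p ∈ (univ ×ˢ univ).filter (fun p : V × V => T.Adj p.1 p.2),
        ((fermatEcc T p.1 : ℚ) * (fermatEcc T p.2 : ℚ))
        ≤ ∑ p ∈ (univ ×ˢ univ).filter (fun p : V × V => T.Adj p.1 p.2),
          (f p.1 + f p.2) / 2 := by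
      apply Finset.sum_le_sum
      intro p _
      have h2 := two_mul_le_add_sq ((fermatEcc T p.1 : ℚ)) ((fermatEcc T p.2 : ℚ))
      simp only [hf]
      linarith
    have heq : ∑ p ∈ (univ ×ˢ univ).filter (fun p : V × V => T.Adj p.1 p.2),
        (f p.1 + f p.2) / 2
        = ∑ u : V, (T.degree u : ℚ) * f u := by
      have hsplit : ∑ p ∈ (univ ×ˢ univ).filter (fun p : V × V => T.Adj p.1 p.2),
          (f p.1 + f p.2) / 2
          = ((∑ p ∈ (univ ×ˢ univ).filter (fun p : V × V => T.Adj p.1 p.2), f p.1)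
            + (∑ p ∈ (univ ×ˢ univ).filter (fun p : V × V => T.Adj p.1 p.2), f p.2)) / 2 := by
        rw [← Finset.sum_add_distrib, ← Finset.sum_div]
      rw [hsplit, pair_sum_deg (T := T) f, pair_sum_deg' (T := T) f]
      ring
    calc ∑ p ∈ (univ ×ˢ univ).filter (fun p : V × V => T.Adj p.1 p.2),
          ((fermatEcc T p.1 : ℚ) * (fermatEcc T p.2 : ℚ))
        ≤ ∑ p ∈ (univ ×ˢ univ).filter (fun p : V × V => T.Adj p.1 p.2),
          (f p.1 + f p.2) / 2 := hle
      _ = ∑ u : V, (T.degree u : ℚ) * f u := heq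
  have hsum2 : ∑ u : V, (T.degree u : ℚ) * f u
      = 2 * ∑ u : V, f u - ∑ u : V, (2 - (T.degree u : ℚ)) * f u := by
    have hpt : ∀ u : V, (2 - (T.degree u : ℚ)) * f u
        = 2 * f u - (T.degree u : ℚ) * f u := fun u => by ring
    rw [Finset.sum_congr rfl (fun u _ => hpt u), Finset.sum_sub_distrib, ← Finset.mul_sum]
    ring
  have hF1cast : (F1 T : ℚ) = ∑ u : V, f u := by
    have : F1 T = ∑ u : V, (fermatEcc T u) ^ 2 := rfl
    rw [this, Nat.cast_sum]
    apply Finset.sum_congr rfl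
    intro u _
    push_cast
    ring
  have hfler : ∀ u : V, f u ≤ f r := by
    intro u
    simp only [hf]
    have h' : ((fermatEcc T u : ℚ)) ≤ (fermatEcc T r : ℚ) := by exact_mod_cast hrmax u
    exact pow_le_pow_left₀ (by positivity) h' 2
  have hF1le : (F1 T : ℚ) ≤ (Fintype.card V : ℚ) * f r := by
    rw [hF1cast]
    have h := Finset.sum_le_card_nsmul univ f (f r) (fun u _ => hfler u)
    rw [Finset.card_univ] at h
    rw [nsmul_eq_mul] at h
    exact h
  have hcore' : 2 * f r ≤ ∑ u : V, (2 - (T.degree u : ℚ)) * f u := hcore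
  have hF2le : (F2 T : ℚ) ≤ (F1 T : ℚ) - f r := by
    linarith [hK1, hsum2, hF1cast, hcore']
  have hm1 : 1 ≤ numEdges T := by omega
  have hmQ : (numEdges T : ℚ) = (Fintype.card V : ℚ) - 1 := by
    rw [hm]
    have h1 : 1 ≤ Fintype.card V := by omega
    push_cast [Nat.cast_sub h1]
    ring
  have hmpos : (0 : ℚ) < (numEdges T : ℚ) := by exact_mod_cast hm1
  have hnpos : (0 : ℚ) < (Fintype.card V : ℚ) := by
    have : 0 < Fintype.card V := by omega
    exact_mod_cast this
  rw [div_le_div_iff₀ hmpos hnpos]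
  have hfrnn : 0 ≤ f r := by positivity
  have h1 : (F2 T : ℚ) * (Fintype.card V : ℚ)
      ≤ ((F1 T : ℚ) - f r) * (Fintype.card V : ℚ) :=
    mul_le_mul_of_nonneg_right hF2le (le_of_lt hnpos)
  rw [hmQ]
  nlinarith [hF1le, h1]
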